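/- Let p be a prime and let e, r be positive natural numbers. Then the number of r-tuples (k₁, …, k_r) with each k_i ∈ {1, 2, …, p^e} such that gcd(p^e, k₁·k₂⋯k_r) = p^e equals ∑_{l=0}^{r-1} H(e, l) · (p - 1)^l · p^{e(r-1) − l}. (Note e(r-1) ≥ l for each l ≤ r - 1 since e ≥ 1.) -/

import Mathlib

open Finset

private lemma count_dvd (p e t : ℕ) (hp : 0 < p) (ht : t ≤ e) :
    ((Finset.Icc 1 (p ^ e)).filter (fun x => p ^ t ∣ x)).card = p ^ (e - t) := by
  have hpt : 0 < p ^ t := pow_pos hp t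
  have key : ((Finset.Icc 1 (p ^ e)).filter (fun x => p ^ t ∣ x))
      = (Finset.Icc 1 (p ^ (e - t))).image (fun m => p ^ t * m) := by
    ext x
    simp only [mem_filter, mem_Icc, mem_image]
    constructor
    · rintro ⟨⟨h1, h2⟩, m, rfl⟩
      refine ⟨m, ⟨?_, ?_⟩, rfl⟩
      · by_contra h; push_neg at h; interval_cases m <;> omega
      · have h3 : p ^ t * m ≤ p ^ t * p ^ (e - t) := by
          rw [← pow_add, Nat.add_sub_cancel' ht]; exact h2
        exact Nat.le_of_mul_le_mul_left h3 hpt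
    · rintro ⟨m, ⟨h1, h2⟩, rfl⟩
      refine ⟨⟨Nat.one_le_iff_ne_zero.2 (Nat.mul_ne_zero hpt.ne' (by omega)), ?_⟩, ⟨m, rfl⟩⟩
      calc p ^ t * m ≤ p ^ t * p ^ (e - t) := Nat.mul_le_mul_left _ h2
        _ = p ^ e := by rw [← pow_add, Nat.add_sub_cancel' ht]
  rw [key, Finset.card_image_of_injective _ (mul_right_injective₀ hpt.ne')]
  simp [Nat.card_Icc]

private lemma fiber_card_eq (p e s : ℕ) (hp : p.Prime) (hs : s ≤ e) :
    ((Finset.Icc 1 (p ^ e)).filter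
        (fun x => min (x.factorization p) s = s)).card = p ^ (e - s) := by
  rw [← count_dvd p e s hp.pos hs]
  congr 1
  apply Finset.filter_congr
  intro x hx
  simp only [mem_Icc] at hx
  have hx0 : x ≠ 0 := by omega
  rw [hp.pow_dvd_iff_le_factorization hx0]
  constructor <;> intro h <;> simp_all <;> omega

private lemma fiber_card_lt (p e s a : ℕ) (hp : p.Prime) (hs : s ≤ e) (ha : a < s) :
    ((Finset.Icc 1 (p ^ e)).filter
        (fun x => min (x.factorization p) s = a)).card = (p - 1) * p ^ (e - a - 1) := by
  have key : ((Finset.Icc 1 (p ^ e)).filter (fun x => min (x.factorization p) s = a))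
      = ((Finset.Icc 1 (p ^ e)).filter (fun x => p ^ a ∣ x)) \
        ((Finset.Icc 1 (p ^ e)).filter (fun x => p ^ (a + 1) ∣ x)) := by
    ext x
    simp only [mem_filter, mem_sdiff, mem_Icc, not_and]
    constructor
    · rintro ⟨⟨h1, h2⟩, h3⟩
      have hx : x ≠ 0 := by omega
      have hfa : x.factorization p = a := by omega
      refine ⟨⟨⟨h1, h2⟩, ?_⟩, fun _ h => ?_⟩
      · rw [hp.pow_dvd_iff_le_factorization hx]; omega
      · rw [hp.pow_dvd_iff_le_factorization hx] at h; omega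
    · rintro ⟨⟨⟨h1, h2⟩, h3⟩, h4⟩
      have hx : x ≠ 0 := by omega
      rw [hp.pow_dvd_iff_le_factorization hx] at h3
      have h4' : ¬ p ^ (a + 1) ∣ x := h4 ⟨h1, h2⟩
      rw [hp.pow_dvd_iff_le_factorization hx] at h4'
      exact ⟨⟨h1, h2⟩, by omega⟩
  rw [key, Finset.card_sdiff_of_subset (by
    intro x hx
    simp only [mem_filter] at hx ⊢
    exact ⟨hx.1, dvd_trans (pow_dvd_pow p (by omega)) hx.2⟩)]
  rw [count_dvd p e a hp.pos (by omega), count_dvd p e (a + 1) hp.pos (by omega)]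
  have h5 : p ^ (e - a) = p * p ^ (e - a - 1) := by
    rw [← pow_succ']
    congr 1
    omega
  rw [Nat.sub_one_mul, h5]
  congr 2

private lemma dvd_mul_iff_aux (p s K x : ℕ) (hp : p.Prime) (hK : K ≠ 0) (hx : x ≠ 0) :
    p ^ s ∣ K * x ↔ p ^ (s - min (x.factorization p) s) ∣ K := by
  rw [hp.pow_dvd_iff_le_factorization (Nat.mul_ne_zero hK hx),
    hp.pow_dvd_iff_le_factorization hK, Nat.factorization_mul hK hx]
  simp only [Finsupp.add_apply]
  omega

private lemma hockey (s l : ℕ) :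
    ∑ a ∈ Finset.range s, Nat.multichoose (s - a) l = Nat.multichoose s (l + 1) := by
  induction s with
  | zero => simp [Nat.multichoose_zero_succ]
  | succ n ih =>
    rw [Finset.sum_range_succ']
    simp only [Nat.succ_sub_succ]
    rw [ih, Nat.sub_zero, Nat.multichoose_succ_succ, add_comm]

private lemma count_all (p e n : ℕ) (hp : 0 < p) :
    ((Fintype.piFinset (fun _ : Fin n => Finset.Icc 1 (p ^ e))).filter
        (fun k => p ^ 0 ∣ ∏ i, k i)).card = p ^ (e * n) := by
  rw [Finset.filter_true_of_mem (by intros; simp)]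
  rw [Fintype.card_piFinset]
  simp only [Nat.card_Icc, Nat.add_sub_cancel, pow_mul, Finset.prod_const, Finset.card_univ,
    Fintype.card_fin]

private lemma count_one (p e s : ℕ) (hp : p.Prime) (hs : s ≤ e) :
    ((Fintype.piFinset (fun _ : Fin 1 => Finset.Icc 1 (p ^ e))).filter
        (fun k => p ^ s ∣ ∏ i, k i)).card = p ^ (e - s) := by
  rw [← count_dvd p e s hp.pos hs]
  apply Finset.card_nbij' (fun k => k 0) (fun x => fun _ => x)
  · intro k hk
    simp only [Finset.mem_coe, mem_filter, Fintype.mem_piFinset, Fin.prod_univ_one] at hk ⊢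
    exact ⟨hk.1 0, hk.2⟩
  · intro x hx
    simp only [Finset.mem_coe, mem_filter, Fintype.mem_piFinset, Fin.prod_univ_one] at hx ⊢
    exact ⟨fun _ => hx.1, hx.2⟩
  · intro k hk
    funext i
    show k 0 = k i
    rw [Subsingleton.elim i 0]
  · intro x hx
    rfl

private lemma snoc_decomp (p e s n : ℕ) (hp : p.Prime) :
    ((Fintype.piFinset (fun _ : Fin (n + 1) => Finset.Icc 1 (p ^ e))).filter
        (fun k => p ^ s ∣ ∏ i, k i)).card
    = ∑ x ∈ Finset.Icc 1 (p ^ e),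
        ((Fintype.piFinset (fun _ : Fin n => Finset.Icc 1 (p ^ e))).filter
          (fun k => p ^ (s - min (x.factorization p) s) ∣ ∏ i, k i)).card := by
  rw [Finset.card_eq_sum_card_fiberwise (f := fun k : Fin (n + 1) → ℕ => k (Fin.last n))
    (t := Finset.Icc 1 (p ^ e))
    (fun k hk => Fintype.mem_piFinset.1 (Finset.mem_filter.1 hk).1 _)]
  refine Finset.sum_congr rfl fun x hx => ?_
  have hx1 : 1 ≤ x := (Finset.mem_Icc.1 hx).1
  apply Finset.card_nbij' (fun f => Fin.init f) (fun k => Fin.snoc k x)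
  · intro f hf
    simp only [Finset.mem_coe, Finset.mem_filter, Fintype.mem_piFinset] at hf ⊢
    obtain ⟨⟨hmem, hdvd⟩, hlast⟩ := hf
    have hK : (∏ i : Fin n, Fin.init f i) ≠ 0 := by
      apply Finset.prod_ne_zero_iff.2
      intro i _
      have := (Finset.mem_Icc.1 (hmem i.castSucc)).1
      simp only [Fin.init]
      omega
    refine ⟨fun i => hmem _, ?_⟩
    rw [← dvd_mul_iff_aux p s _ x hp hK (by omega), ← hlast]
    have heq : (∏ i : Fin n, Fin.init f i) = ∏ i : Fin n, f i.castSucc := rfl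
    rw [heq, ← Fin.prod_univ_castSucc]
    exact hdvd
  · intro k hk
    simp only [Finset.mem_coe, Finset.mem_filter, Fintype.mem_piFinset] at hk ⊢
    obtain ⟨hmem, hdvd⟩ := hk
    have hK : (∏ i : Fin n, k i) ≠ 0 := by
      apply Finset.prod_ne_zero_iff.2
      intro i _
      have := (Finset.mem_Icc.1 (hmem i)).1
      omega
    refine ⟨⟨fun i => ?_, ?_⟩, by simp⟩
    · refine Fin.lastCases ?_ (fun j => ?_) i <;> simp [hmem, hx]
    · rw [Fin.prod_snoc, dvd_mul_iff_aux p s _ x hp hK (by omega)]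
      exact hdvd
  · intro f hf
    simp only [Finset.mem_coe, Finset.mem_filter] at hf
    rw [← hf.2]
    exact Fin.snoc_init_self f
  · intro k hk
    simp

private lemma main_count (p e : ℕ) (hp : p.Prime) (he : 0 < e) :
    ∀ n, ∀ s ≤ e,
    ((Fintype.piFinset (fun _ : Fin (n + 1) => Finset.Icc 1 (p ^ e))).filter
        (fun k => p ^ s ∣ ∏ i, k i)).card
    = ∑ l ∈ Finset.range (n + 1),
        Nat.multichoose s l * (p - 1) ^ l * p ^ (e * (n + 1) - s - l) := by
  intro n
  induction n with
  | zero =>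
    intro s hs
    rw [count_one p e s hp hs]
    simp [Nat.multichoose_zero_right]
  | succ n ih =>
    intro s hs
    have h1 : n ≤ e * n := Nat.le_mul_of_pos_left n he
    have hM1 : e * (n + 1) = e * n + e := by ring
    have hM2 : e * (n + 2) = e * n + 2 * e := by ring
    rw [snoc_decomp p e s (n + 1) hp]
    have hmaps : ∀ x ∈ Finset.Icc 1 (p ^ e),
        min (x.factorization p) s ∈ Finset.range (s + 1) := by
      intro x _
      simp [Nat.lt_succ_iff]
    rw [← Finset.sum_fiberwise_of_maps_to hmaps]
    have inner : ∀ a ∈ Finset.range (s + 1),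
        (∑ x ∈ (Finset.Icc 1 (p ^ e)).filter
            (fun x => min (x.factorization p) s = a),
          ((Fintype.piFinset (fun _ : Fin (n + 1) => Finset.Icc 1 (p ^ e))).filter
            (fun k => p ^ (s - min (x.factorization p) s) ∣ ∏ i, k i)).card)
        = ((Finset.Icc 1 (p ^ e)).filter
            (fun x => min (x.factorization p) s = a)).card *
          ((Fintype.piFinset (fun _ : Fin (n + 1) => Finset.Icc 1 (p ^ e))).filter
            (fun k => p ^ (s - a) ∣ ∏ i, k i)).card := by
      intro a _
      rw [Finset.sum_congr rfl (fun x hx => by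
        rw [(Finset.mem_filter.1 hx).2]), Finset.sum_const, smul_eq_mul]
    rw [Finset.sum_congr rfl inner, Finset.sum_range_succ]
    rw [fiber_card_eq p e s hp hs, Nat.sub_self]
    rw [count_all p e (n + 1) hp.pos]
    have hlast : p ^ (e - s) * p ^ (e * (n + 1)) = p ^ (e * (n + 2) - s) := by
      rw [← pow_add]
      congr 1
      omega
    rw [hlast]
    have hterm : ∀ a ∈ Finset.range s,
        ((Finset.Icc 1 (p ^ e)).filter
            (fun x => min (x.factorization p) s = a)).card *
          ((Fintype.piFinset (fun _ : Fin (n + 1) => Finset.Icc 1 (p ^ e))).filter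
            (fun k => p ^ (s - a) ∣ ∏ i, k i)).card
        = ∑ l ∈ Finset.range (n + 1),
            Nat.multichoose (s - a) l *
              ((p - 1) ^ (l + 1) * p ^ (e * (n + 2) - s - (l + 1))) := by
      intro a ha
      rw [Finset.mem_range] at ha
      rw [fiber_card_lt p e s a hp hs ha, ih (s - a) (by omega), Finset.mul_sum]
      refine Finset.sum_congr rfl fun l hl => ?_
      rw [Finset.mem_range] at hl
      have hexp : (e - a - 1) + (e * (n + 1) - (s - a) - l) = e * (n + 2) - s - (l + 1) := by
        omega
      calc (p - 1) * p ^ (e - a - 1) *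
            (Nat.multichoose (s - a) l * (p - 1) ^ l * p ^ (e * (n + 1) - (s - a) - l))
          = Nat.multichoose (s - a) l *
            ((p - 1) ^ (l + 1) * (p ^ (e - a - 1) * p ^ (e * (n + 1) - (s - a) - l))) := by
            ring
        _ = _ := by rw [← pow_add, hexp]
    rw [Finset.sum_congr rfl hterm, Finset.sum_comm]
    have hswap : ∀ l ∈ Finset.range (n + 1),
        (∑ a ∈ Finset.range s, Nat.multichoose (s - a) l *
            ((p - 1) ^ (l + 1) * p ^ (e * (n + 2) - s - (l + 1))))
        = Nat.multichoose s (l + 1) * (p - 1) ^ (l + 1) * p ^ (e * (n + 2) - s - (l + 1)) := by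
      intro l _
      rw [← Finset.sum_mul, hockey s l, mul_assoc]
    rw [Finset.sum_congr rfl hswap]
    have h22 : n + 1 + 1 = n + 2 := rfl
    rw [h22]
    conv_rhs => rw [Finset.sum_range_succ']
    congr 1
    simp [Nat.multichoose_zero_right]

theorem stmt_13 (p : ℕ) (hp : p.Prime) (e r : ℕ) (he : 0 < e) (hr : 0 < r) :
    ((Fintype.piFinset (fun _ : Fin r => Finset.Icc 1 (p ^ e))).filter
          (fun k => Nat.gcd (p ^ e) (∏ i, k i) = p ^ e)).card
      = ∑ l ∈ Finset.range r, Nat.multichoose e l * (p - 1) ^ l * p ^ (e * (r - 1) - l) := by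
  obtain ⟨n, rfl⟩ : ∃ n, r = n + 1 := ⟨r - 1, by omega⟩
  have hpred : ∀ k ∈ Fintype.piFinset (fun _ : Fin (n + 1) => Finset.Icc 1 (p ^ e)),
      (Nat.gcd (p ^ e) (∏ i, k i) = p ^ e) ↔ p ^ e ∣ ∏ i, k i := by
    intro k _
    constructor
    · intro h
      rw [← h]
      exact Nat.gcd_dvd_right _ _
    · exact Nat.gcd_eq_left
  rw [Finset.filter_congr hpred, main_count p e hp he n e le_rfl]
  refine Finset.sum_congr rfl fun l hl => ?_
  rw [Finset.mem_range] at hl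
  simp only [Nat.add_sub_cancel]
  congr 2
  have hM1 : e * (n + 1) = e * n + e := by ring
  omega
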